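/- Let E be a separable Hilbert space over ℝ, let k ≥ 1 be an integer, and let Q be a Borel probability measure on E with ∫|x|² dQ(x) < ∞ whose support is contained in a closed ball. Then there exists a finite set c = {c₁,…,c_k} ⊆ E of at most k points attaining the infimum of c ↦ ∫ min_{1≤j≤k} |x − c_j|² dQ(x) over all sets of at most k points of E. -/

import Mathlib

open MeasureTheory Metric Set
open Filter Topology TopologicalSpace

local notation "⟪" x ", " y "⟫" => @inner ℝ _ _ x y

section Aux
variable {E : Type*} [NormedAddCommGroup E] [InnerProductSpace ℝ E]
    [CompleteSpace E] [SecondCountableTopology E]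

lemma weak_extract {E : Type*} [NormedAddCommGroup E] [InnerProductSpace ℝ E]
    [CompleteSpace E] [SecondCountableTopology E] (M : ℝ) (u : ℕ → E)
    (hu : ∀ n, ‖u n‖ ≤ M) :
    ∃ c : E, ∃ ψ : ℕ → ℕ, StrictMono ψ ∧
      ∀ y : E, Tendsto (fun n => ⟪u (ψ n), y⟫) atTop (𝓝 ⟪c, y⟫) := by
  have hM : 0 ≤ M := le_trans (norm_nonneg _) (hu 0)
  have : Nonempty E := ⟨0⟩
  set y : ℕ → E := denseSeq E with hy
  have hdense : DenseRange y := denseRange_denseSeq E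
  set K : Set (ℕ → ℝ) := Set.univ.pi fun m => Set.Icc (-(M * ‖y m‖)) (M * ‖y m‖) with hK
  have hKc : IsCompact K := isCompact_univ_pi fun m => isCompact_Icc
  have hv : ∀ n, (fun m => ⟪u n, y m⟫) ∈ K := by
    intro n
    intro m _
    have h1 : |⟪u n, y m⟫| ≤ ‖u n‖ * ‖y m‖ := abs_real_inner_le_norm _ _
    have h2 : ‖u n‖ * ‖y m‖ ≤ M * ‖y m‖ :=
      mul_le_mul_of_nonneg_right (hu n) (norm_nonneg _)
    exact abs_le.mp (h1.trans h2)
  obtain ⟨L, -, ψ, hψ, hconv⟩ := hKc.isSeqCompact hv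
  have hptc : ∀ m, Tendsto (fun n => ⟪u (ψ n), y m⟫) atTop (𝓝 (L m)) := by
    rw [tendsto_pi_nhds] at hconv
    exact fun m => hconv m
  have key : ∀ w : E, CauchySeq fun n => ⟪u (ψ n), w⟫ := by
    intro w
    rw [Metric.cauchySeq_iff]
    intro ε hε
    have hδ : 0 < ε / (4 * (M + 1)) := by positivity
    obtain ⟨m, hm⟩ : ∃ m, dist w (y m) < ε / (4 * (M + 1)) := by
      have := hdense.exists_dist_lt w hδ
      simpa using this
    have hc := (hptc m).cauchySeq
    rw [Metric.cauchySeq_iff] at hc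
    obtain ⟨N, hN⟩ := hc (ε / 2) (by positivity)
    refine ⟨N, fun a ha b hb => ?_⟩
    have hbound : ∀ n, |⟪u (ψ n), w - y m⟫| ≤ ε / 4 := by
      intro n
      have h1 : |⟪u (ψ n), w - y m⟫| ≤ ‖u (ψ n)‖ * ‖w - y m‖ := abs_real_inner_le_norm _ _
      have h2 : ‖w - y m‖ ≤ ε / (4 * (M + 1)) := by
        rw [← dist_eq_norm] at *
        exact hm.le
      calc |⟪u (ψ n), w - y m⟫| ≤ ‖u (ψ n)‖ * ‖w - y m‖ := h1
        _ ≤ M * (ε / (4 * (M + 1))) := by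
            apply mul_le_mul (hu _) h2 (norm_nonneg _) hM
        _ ≤ (M + 1) * (ε / (4 * (M + 1))) := by nlinarith [hδ.le]
        _ = ε / 4 := by field_simp
    have hdab := hN a ha b hb
    have expand : ∀ n, ⟪u (ψ n), w⟫ = ⟪u (ψ n), y m⟫ + ⟪u (ψ n), w - y m⟫ := by
      intro n; rw [inner_sub_right]; ring
    rw [Real.dist_eq] at hdab ⊢
    rw [expand a, expand b]
    have := hbound a
    have := hbound b
    have h4 : |⟪u (ψ a), y m⟫ - ⟪u (ψ b), y m⟫| < ε / 2 := hdab
    have tri : |⟪u (ψ a), y m⟫ + ⟪u (ψ a), w - y m⟫ - (⟪u (ψ b), y m⟫ + ⟪u (ψ b), w - y m⟫)|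
        ≤ |⟪u (ψ a), y m⟫ - ⟪u (ψ b), y m⟫| + (|⟪u (ψ a), w - y m⟫| + |⟪u (ψ b), w - y m⟫|) := by
      have e : ⟪u (ψ a), y m⟫ + ⟪u (ψ a), w - y m⟫ - (⟪u (ψ b), y m⟫ + ⟪u (ψ b), w - y m⟫)
          = (⟪u (ψ a), y m⟫ - ⟪u (ψ b), y m⟫) + (⟪u (ψ a), w - y m⟫ - ⟪u (ψ b), w - y m⟫) := by
        ring
      rw [e]
      refine (abs_add_le _ _).trans ?_
      have := abs_sub ⟪u (ψ a), w - y m⟫ ⟪u (ψ b), w - y m⟫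
      linarith
    linarith
  choose g hg using fun w => cauchySeq_tendsto_of_complete (key w)
  have gadd : ∀ w w', g (w + w') = g w + g w' := by
    intro w w'
    refine tendsto_nhds_unique ?_ ((hg w).add (hg w'))
    simpa [inner_add_right] using hg (w + w')
  have gsmul : ∀ (t : ℝ) w, g (t • w) = t * g w := by
    intro t w
    refine tendsto_nhds_unique ?_ ((hg w).const_mul t)
    simpa [inner_smul_right] using hg (t • w)
  have gbound : ∀ w, ‖g w‖ ≤ M * ‖w‖ := by
    intro w
    rw [Real.norm_eq_abs]
    refine le_of_tendsto (hg w).abs (Eventually.of_forall fun n => ?_)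
    exact (abs_real_inner_le_norm _ _).trans (mul_le_mul_of_nonneg_right (hu _) (norm_nonneg _))
  let glin : E →ₗ[ℝ] ℝ := { toFun := g, map_add' := gadd, map_smul' := gsmul }
  let F : E →L[ℝ] ℝ := LinearMap.mkContinuous glin M gbound
  refine ⟨(InnerProductSpace.toDual ℝ E).symm F, ψ, hψ, fun w => ?_⟩
  have hc : ⟪(InnerProductSpace.toDual ℝ E).symm F, w⟫ = F w :=
    InnerProductSpace.toDual_symm_apply
  rw [hc]
  exact hg w

lemma weak_extract_multi (k : ℕ) (M : ℝ) (u : ℕ → Fin k → E)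
    (hu : ∀ n j, ‖u n j‖ ≤ M) :
    ∃ c : Fin k → E, ∃ ψ : ℕ → ℕ, StrictMono ψ ∧
      ∀ (j : Fin k) (y : E), Tendsto (fun n => ⟪u (ψ n) j, y⟫) atTop (𝓝 ⟪c j, y⟫) := by
  induction k with
  | zero => exact ⟨Fin.elim0, id, strictMono_id, fun j => j.elim0⟩
  | succ k ih =>
    obtain ⟨c₀, ψ₀, hψ₀, h₀⟩ := ih (fun n (j : Fin k) => u n j.castSucc)
      (fun n j => hu n j.castSucc)
    obtain ⟨c₁, ψ₁, hψ₁, h₁⟩ := weak_extract M (fun n => u (ψ₀ n) (Fin.last k))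
      (fun n => hu (ψ₀ n) (Fin.last k))
    refine ⟨Fin.lastCases c₁ c₀, ψ₀ ∘ ψ₁, hψ₀.comp hψ₁, fun j y => ?_⟩
    refine Fin.lastCases ?_ ?_ j
    · simpa using h₁ y
    · intro i
      simpa [Function.comp_def] using (h₀ i y).comp (hψ₁.tendsto_atTop)

end Aux

/-- existence of an optimal codebook of at most `k` points for a probability
measure with finite second moment whose support is contained in a closed ball
(Lemma `lem:cont` (1), after Theorem 4.12 in Graf–Luschgy). -/
theorem stmt15 {E : Type*} [NormedAddCommGroup E] [InnerProductSpace ℝ E]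
    [CompleteSpace E] [SecondCountableTopology E] [MeasurableSpace E] [BorelSpace E]
    (k : ℕ) (hk : 0 < k) (Q : Measure E) [IsProbabilityMeasure Q]
    (hmom : Integrable (fun x => ‖x‖ ^ 2) Q)
    (hball : ∃ z : E, ∃ r : ℝ, Q (closedBall z r) = 1) :
    ∃ c : Fin k → E, ∀ c' : Fin k → E,
      ∫ x, (⨅ j, ‖x - c j‖ ^ 2) ∂Q ≤ ∫ x, (⨅ j, ‖x - c' j‖ ^ 2) ∂Q := by
  obtain ⟨z, r, hQB⟩ := hball
  have hr : 0 ≤ r := by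
    by_contra h
    rw [closedBall_eq_empty.mpr (lt_of_not_ge h)] at hQB
    simp at hQB
  set R : ℝ := 2 * r + 1 with hR
  have hR0 : 0 ≤ R := by simp only [hR]; linarith
  have hkne : Nonempty (Fin k) := ⟨⟨0, hk⟩⟩
  -- basic facts about G c x := ⨅ j, ‖x - c j‖ ^ 2
  have hGnonneg : ∀ (c : Fin k → E) (x : E), (0:ℝ) ≤ ⨅ j, ‖x - c j‖ ^ 2 :=
    fun c x => le_ciInf fun j => by positivity
  have hGle : ∀ (c : Fin k → E) (x : E) (j : Fin k), (⨅ j, ‖x - c j‖ ^ 2) ≤ ‖x - c j‖ ^ 2 :=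
    fun c x j => ciInf_le (Finite.bddBelow_range _) j
  have hGmeas : ∀ c : Fin k → E, Measurable fun x => ⨅ j, ‖x - c j‖ ^ 2 := by
    intro c
    exact Measurable.iInf fun j =>
      ((continuous_id.sub continuous_const).norm.pow 2).measurable
  have hGint : ∀ c : Fin k → E, Integrable (fun x => ⨅ j, ‖x - c j‖ ^ 2) Q := by
    intro c
    obtain ⟨j0⟩ := hkne
    refine Integrable.mono' (g := fun x => 2 * ‖x‖ ^ 2 + 2 * ‖c j0‖ ^ 2)
      ((hmom.const_mul 2).add (integrable_const _)) (hGmeas c).aestronglyMeasurable ?_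
    filter_upwards with x
    rw [Real.norm_eq_abs, abs_of_nonneg (hGnonneg c x)]
    have h1 := hGle c x j0
    have h2 : ‖x - c j0‖ ≤ ‖x‖ + ‖c j0‖ := norm_sub_le _ _
    have h3 : ‖x - c j0‖ ^ 2 ≤ (‖x‖ + ‖c j0‖) ^ 2 :=
      pow_le_pow_left₀ (norm_nonneg _) h2 2
    nlinarith [sq_nonneg (‖x‖ - ‖c j0‖)]
  have hFnonneg : ∀ c : Fin k → E, 0 ≤ ∫ x, (⨅ j, ‖x - c j‖ ^ 2) ∂Q :=
    fun c => integral_nonneg (hGnonneg c)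
  -- a.e. membership in the ball
  have haeB : ∀ᵐ x ∂Q, x ∈ closedBall z r := by
    have h1 : Q (closedBall z r)ᶜ = 0 := by
      rw [measure_compl measurableSet_closedBall (measure_ne_top _ _), hQB,
        measure_univ]
      simp
    rw [ae_iff]
    exact h1
  -- clamping step
  have clamp : ∀ c' : Fin k → E, ∃ c'' : Fin k → E, (∀ j, ‖c'' j - z‖ ≤ R) ∧
      ∫ x, (⨅ j, ‖x - c'' j‖ ^ 2) ∂Q ≤ ∫ x, (⨅ j, ‖x - c' j‖ ^ 2) ∂Q := by
    intro c'
    refine ⟨fun j => if ‖c' j - z‖ ≤ R then c' j else z, fun j => ?_, ?_⟩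
    · by_cases h : ‖c' j - z‖ ≤ R <;> simp [h, hR0]
    · refine integral_mono_ae (hGint _) (hGint c') ?_
      filter_upwards [haeB] with x hx
      refine le_ciInf fun j => ?_
      refine (hGle _ x j).trans ?_
      by_cases h : ‖c' j - z‖ ≤ R
      · simp only [h, if_true]
        exact le_refl _
      · simp only [h, if_false]
        push_neg at h
        have h1 : ‖x - z‖ ≤ r := by rwa [mem_closedBall, dist_eq_norm] at hx
        have h2 : ‖c' j - z‖ ≤ ‖c' j - x‖ + ‖x - z‖ := norm_sub_le_norm_sub_add_norm_sub _ _ _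
        have h3 : ‖c' j - x‖ = ‖x - c' j‖ := norm_sub_rev _ _
        have h4 : ‖x - z‖ ≤ ‖x - c' j‖ := by
          rw [h3] at h2
          simp only [hR] at h
          linarith
        exact pow_le_pow_left₀ (norm_nonneg _) h4 2
  -- minimizing sequence
  set S : Set ℝ := (fun c : Fin k → E => ∫ x, (⨅ j, ‖x - c j‖ ^ 2) ∂Q) ''
      {c : Fin k → E | ∀ j, ‖c j - z‖ ≤ R} with hS
  have hSne : S.Nonempty := ⟨_, ⟨fun _ => z, fun j => by simpa using hR0, rfl⟩⟩
  have hSbd : BddBelow S := by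
    refine ⟨0, ?_⟩
    rintro s ⟨c, -, rfl⟩
    exact hFnonneg c
  set d : ℝ := sInf S with hd
  have hd0 : 0 ≤ d := le_csInf hSne (by rintro s ⟨c, -, rfl⟩; exact hFnonneg c)
  have hseq : ∀ n : ℕ, ∃ c : Fin k → E, (∀ j, ‖c j - z‖ ≤ R) ∧
      (∫ x, (⨅ j, ‖x - c j‖ ^ 2) ∂Q) < d + 1 / (n + 1) := by
    intro n
    obtain ⟨s, hsS, hs⟩ := Real.lt_sInf_add_pos hSne
      (show (0:ℝ) < 1 / (n + 1) by positivity)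
    obtain ⟨c, hc, rfl⟩ := hsS
    exact ⟨c, hc, hs⟩
  choose u hu1 hu2 using hseq
  have hubd : ∀ n j, ‖u n j‖ ≤ ‖z‖ + R := by
    intro n j
    calc ‖u n j‖ = ‖(u n j - z) + z‖ := by rw [sub_add_cancel]
      _ ≤ ‖u n j - z‖ + ‖z‖ := norm_add_le _ _
      _ ≤ ‖z‖ + R := by have := hu1 n j; linarith
  obtain ⟨c, ψ, hψ, hw⟩ := weak_extract_multi k (‖z‖ + R) u hubd
  refine ⟨c, fun c' => ?_⟩
  -- pointwise lower semicontinuity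
  have key : ∀ (x : E) (j : Fin k) (ε : ℝ), 0 < ε →
      ∀ᶠ n in atTop, ‖x - c j‖ ^ 2 - ε ≤ ‖x - u (ψ n) j‖ ^ 2 := by
    intro x j ε hε
    have h1 : Tendsto (fun n => ⟪x - u (ψ n) j, x - c j⟫) atTop (𝓝 (‖x - c j‖ ^ 2)) := by
      have h2 := hw j (x - c j)
      have h3 : Tendsto (fun n => ⟪x, x - c j⟫ - ⟪u (ψ n) j, x - c j⟫) atTop
          (𝓝 (⟪x, x - c j⟫ - ⟪c j, x - c j⟫)) := tendsto_const_nhds.sub h2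
      have h4 : ⟪x, x - c j⟫ - ⟪c j, x - c j⟫ = ‖x - c j‖ ^ 2 := by
        rw [← inner_sub_left, real_inner_self_eq_norm_sq]
      rw [h4] at h3
      convert h3 using 2 with n
      rw [inner_sub_left]
    have h5 : ∀ᶠ n in atTop, ‖x - c j‖ ^ 2 - ε / 2 < ⟪x - u (ψ n) j, x - c j⟫ :=
      h1.eventually_const_lt (by linarith)
    filter_upwards [h5] with n hn
    have h6 : ⟪x - u (ψ n) j, x - c j⟫ ≤ ‖x - u (ψ n) j‖ * ‖x - c j‖ :=
      real_inner_le_norm _ _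
    nlinarith [sq_nonneg (‖x - u (ψ n) j‖ - ‖x - c j‖)]
  -- pointwise liminf bound in ℝ≥0∞
  have keyE : ∀ x : E, ENNReal.ofReal (⨅ j, ‖x - c j‖ ^ 2) ≤
      liminf (fun n => ENNReal.ofReal (⨅ j, ‖x - u (ψ n) j‖ ^ 2)) atTop := by
    intro x
    rw [le_liminf_iff]
    intro y hy
    have hytop : y ≠ ⊤ := hy.ne_top
    have hb : y.toReal < ⨅ j, ‖x - c j‖ ^ 2 := by
      rwa [ENNReal.lt_ofReal_iff_toReal_lt hytop] at hy
    set ε : ℝ := ((⨅ j, ‖x - c j‖ ^ 2) - y.toReal) / 2 with hεdef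
    have hε0 : 0 < ε := by simp only [hεdef]; linarith
    have hev : ∀ᶠ n in atTop, ∀ j, ‖x - c j‖ ^ 2 - ε ≤ ‖x - u (ψ n) j‖ ^ 2 :=
      eventually_all.mpr fun j => key x j ε hε0
    filter_upwards [hev] with n hn
    have h7 : y.toReal < ⨅ j, ‖x - u (ψ n) j‖ ^ 2 := by
      have h8 : (⨅ j, ‖x - c j‖ ^ 2) - ε ≤ ⨅ j, ‖x - u (ψ n) j‖ ^ 2 :=
        le_ciInf fun j => le_trans (by linarith [hGle c x j]) (hn j)
      simp only [hεdef] at h8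
      linarith
    calc y = ENNReal.ofReal y.toReal := (ENNReal.ofReal_toReal hytop).symm
      _ < ENNReal.ofReal (⨅ j, ‖x - u (ψ n) j‖ ^ 2) := by
          rw [ENNReal.ofReal_lt_ofReal_iff
            (lt_of_le_of_lt ENNReal.toReal_nonneg h7)]
          exact h7
  -- lintegral form of the integral
  have hofint : ∀ c0 : Fin k → E, ENNReal.ofReal (∫ x, (⨅ j, ‖x - c0 j‖ ^ 2) ∂Q)
      = ∫⁻ x, ENNReal.ofReal (⨅ j, ‖x - c0 j‖ ^ 2) ∂Q :=
    fun c0 => MeasureTheory.ofReal_integral_eq_lintegral_ofReal (hGint c0)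
      (Eventually.of_forall (hGnonneg c0))
  -- Fatou
  have fatou : (∫⁻ x, ENNReal.ofReal (⨅ j, ‖x - c j‖ ^ 2) ∂Q) ≤
      liminf (fun n => ∫⁻ x, ENNReal.ofReal (⨅ j, ‖x - u (ψ n) j‖ ^ 2) ∂Q) atTop :=
    calc (∫⁻ x, ENNReal.ofReal (⨅ j, ‖x - c j‖ ^ 2) ∂Q)
        ≤ ∫⁻ x, liminf (fun n => ENNReal.ofReal (⨅ j, ‖x - u (ψ n) j‖ ^ 2)) atTop ∂Q :=
          lintegral_mono keyE
      _ ≤ liminf (fun n => ∫⁻ x, ENNReal.ofReal (⨅ j, ‖x - u (ψ n) j‖ ^ 2) ∂Q) atTop :=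
          lintegral_liminf_le fun n => (hGmeas (u (ψ n))).ennreal_ofReal
  have hupper : liminf (fun n => ∫⁻ x, ENNReal.ofReal (⨅ j, ‖x - u (ψ n) j‖ ^ 2) ∂Q) atTop
      ≤ ENNReal.ofReal d := by
    have h1 : ∀ n, (∫⁻ x, ENNReal.ofReal (⨅ j, ‖x - u (ψ n) j‖ ^ 2) ∂Q)
        ≤ ENNReal.ofReal (d + 1 / (ψ n + 1)) := by
      intro n
      rw [← hofint]
      exact ENNReal.ofReal_le_ofReal (hu2 (ψ n)).le
    have h3 : Tendsto (fun n : ℕ => d + 1 / ((n : ℝ) + 1)) atTop (𝓝 d) := by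
      simpa using (tendsto_const_nhds : Tendsto (fun _ : ℕ => d) atTop (𝓝 d)).add tendsto_one_div_add_atTop_nhds_zero_nat
    have h2 : Tendsto (fun n => ENNReal.ofReal (d + 1 / ((ψ n : ℝ) + 1))) atTop
        (𝓝 (ENNReal.ofReal d)) :=
      (ENNReal.continuous_ofReal.tendsto d).comp (h3.comp hψ.tendsto_atTop)
    calc liminf (fun n => ∫⁻ x, ENNReal.ofReal (⨅ j, ‖x - u (ψ n) j‖ ^ 2) ∂Q) atTop
        ≤ liminf (fun n => ENNReal.ofReal (d + 1 / ((ψ n : ℝ) + 1))) atTop :=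
          liminf_le_liminf (Eventually.of_forall h1)
      _ = ENNReal.ofReal d := h2.liminf_eq
  obtain ⟨c'', hc''A, hc''le⟩ := clamp c'
  have hdle : d ≤ ∫ x, (⨅ j, ‖x - c'' j‖ ^ 2) ∂Q := csInf_le hSbd ⟨c'', hc''A, rfl⟩
  have hFc : ∫ x, (⨅ j, ‖x - c j‖ ^ 2) ∂Q ≤ d := by
    have h9 := (hofint c).le.trans (fatou.trans hupper)
    rwa [ENNReal.ofReal_le_ofReal_iff hd0] at h9
  linarith
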